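/- Let m, n be positive integers and σ : {1,…,n} → {1,…,m}, and set w_i := #σ^{-1}(i) for 1 ≤ i ≤ m. For i ∈ {1,…,n} let c_i := #{j < i : σ(j) = σ(i)}, and for σ(i) ≤ k ≤ m−1 let c_{i,k} := #{j ∈ {1,…,n} : σ(i) < σ(j) ≤ k+1}. Then the multiset of triples {(σ(i), k, c_i + c_{i,k} + 1) : 1 ≤ i ≤ n, σ(i) ≤ k ≤ m−1} is equal to the multiset {(i, k, j + w_{i+1} + w_{i+2} + ⋯ + w_{k+1}) : 1 ≤ i ≤ m−1, 1 ≤ j ≤ w_i, i ≤ k ≤ m−1}. Consequently, for any function g with values in a commutative monoid and any parameters y_{i,k}, ∏_{i=1}^{n} ∏_{k=σ(i)}^{m-1} g((qħ)^{c_i + c_{i,k} + 1} · y_{σ(i),k}) = ∏_{i=1}^{m-1} ∏_{j=1}^{w_i} ∏_{k=i}^{m-1} g((qħ)^{j + Σ_{l=i}^{k} w_{l+1}} · y_{i,k}). -/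

import Mathlib

/-- `w_i = #σ⁻¹(i)`, the number of `j ∈ {1,…,n}` with `σ(j) = i`. -/
def wgt (n : ℕ) (σ : ℕ → ℕ) (i : ℕ) : ℕ :=
  ((Finset.Icc 1 n).filter fun j => σ j = i).card

/-- `c_i = #{j < i : σ(j) = σ(i)}`. -/
def cLeft (σ : ℕ → ℕ) (i : ℕ) : ℕ :=
  ((Finset.Ico 1 i).filter fun j => σ j = σ i).card

/-- `c_{i,k} = #{j ∈ {1,…,n} : σ(i) < σ(j) ≤ k+1}`. -/
def cMid (n : ℕ) (σ : ℕ → ℕ) (i k : ℕ) : ℕ :=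
  ((Finset.Icc 1 n).filter fun j => σ i < σ j ∧ σ j ≤ k + 1).card

lemma fiber_partition (m n : ℕ) (σ : ℕ → ℕ)
    (hσ : ∀ i ∈ Finset.Icc 1 n, σ i ∈ Finset.Icc 1 m) :
    ((Finset.Icc 1 m).val.bind fun i =>
      ((Finset.Icc 1 n).filter fun a => σ a = i).val) = (Finset.Icc 1 n).val := by
  ext b
  rw [Multiset.count_bind]
  have : ((Finset.Icc 1 m).val.map fun i =>
      Multiset.count b ((Finset.Icc 1 n).filter fun a => σ a = i).val)
      = (Finset.Icc 1 m).val.map fun i =>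
        if σ b = i then Multiset.count b (Finset.Icc 1 n).val else 0 := by
    apply Multiset.map_congr rfl
    intro i _
    rw [Finset.filter_val, Multiset.count_filter]
  rw [this]
  by_cases hb : b ∈ Finset.Icc 1 n
  · have hσb := hσ b hb
    rw [show ((Finset.Icc 1 m).val.map fun i =>
        if σ b = i then Multiset.count b (Finset.Icc 1 n).val else 0).sum
        = ∑ i ∈ Finset.Icc 1 m, if σ b = i then Multiset.count b (Finset.Icc 1 n).val else 0
        from rfl, Finset.sum_ite_eq, if_pos hσb]
  · have : Multiset.count b (Finset.Icc 1 n).val = 0 := by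
      simp [Multiset.count_eq_zero, hb]
    simp [this]

lemma cLeft_strictMonoOn (n : ℕ) (σ : ℕ → ℕ) (i : ℕ) {a b : ℕ}
    (ha : a ∈ (Finset.Icc 1 n).filter fun x => σ x = i)
    (hb : b ∈ (Finset.Icc 1 n).filter fun x => σ x = i)
    (hab : a < b) : cLeft σ a < cLeft σ b := by
  simp only [Finset.mem_filter, Finset.mem_Icc] at ha hb
  unfold cLeft
  rw [ha.2, hb.2]
  have hsub : insert a ((Finset.Ico 1 a).filter fun j => σ j = i)
      ⊆ (Finset.Ico 1 b).filter fun j => σ j = i := by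
    intro x hx
    rcases Finset.mem_insert.mp hx with rfl | hx
    · exact Finset.mem_filter.mpr ⟨Finset.mem_Ico.mpr ⟨ha.1.1, hab⟩, ha.2⟩
    · simp only [Finset.mem_filter, Finset.mem_Ico] at hx ⊢
      exact ⟨⟨hx.1.1, hx.1.2.trans hab⟩, hx.2⟩
  have hnot : a ∉ (Finset.Ico 1 a).filter fun j => σ j = i := by
    simp
  calc ((Finset.Ico 1 a).filter fun j => σ j = i).card
      < (insert a ((Finset.Ico 1 a).filter fun j => σ j = i)).card := by
        rw [Finset.card_insert_of_notMem hnot]; omega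
    _ ≤ _ := Finset.card_le_card hsub

lemma cLeft_lt_wgt (n : ℕ) (σ : ℕ → ℕ) (i : ℕ) {a : ℕ}
    (ha : a ∈ (Finset.Icc 1 n).filter fun x => σ x = i) :
    cLeft σ a < wgt n σ i := by
  simp only [Finset.mem_filter, Finset.mem_Icc] at ha
  have hsub : insert a ((Finset.Ico 1 a).filter fun j => σ j = σ a)
      ⊆ (Finset.Icc 1 n).filter fun j => σ j = i := by
    intro x hx
    rcases Finset.mem_insert.mp hx with rfl | hx
    · exact Finset.mem_filter.mpr ⟨Finset.mem_Icc.mpr ha.1, ha.2⟩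
    · simp only [Finset.mem_filter, Finset.mem_Ico, Finset.mem_Icc] at hx ⊢
      exact ⟨⟨hx.1.1, le_trans (le_of_lt hx.1.2) ha.1.2⟩, by rw [hx.2, ha.2]⟩
  have hnot : a ∉ (Finset.Ico 1 a).filter fun j => σ j = σ a := by simp
  have := Finset.card_le_card hsub
  rw [Finset.card_insert_of_notMem hnot] at this
  unfold cLeft wgt
  omega

lemma cLeft_map (n : ℕ) (σ : ℕ → ℕ) (i : ℕ) :
    (((Finset.Icc 1 n).filter fun a => σ a = i).val).map (cLeft σ)
      = (Finset.range (wgt n σ i)).val := by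
  set F := (Finset.Icc 1 n).filter fun a => σ a = i with hF
  have hinj : Set.InjOn (cLeft σ) F := by
    intro a ha b hb hab
    by_contra hne
    rcases Nat.lt_or_ge a b with h | h
    · exact absurd hab (Nat.ne_of_lt (cLeft_strictMonoOn n σ i ha hb h))
    · have h' : b < a := by omega
      exact absurd hab.symm (Nat.ne_of_lt (cLeft_strictMonoOn n σ i hb ha h'))
  have himg : F.image (cLeft σ) = Finset.range (wgt n σ i) := by
    apply Finset.eq_of_subset_of_card_le
    · intro x hx
      rcases Finset.mem_image.mp hx with ⟨a, ha, rfl⟩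
      exact Finset.mem_range.mpr (cLeft_lt_wgt n σ i ha)
    · rw [Finset.card_range, Finset.card_image_of_injOn hinj]
      rfl
  rw [← Finset.image_val_of_injOn hinj, himg]

lemma cMid_eq (n : ℕ) (σ : ℕ → ℕ) (a k : ℕ) :
    cMid n σ a k = ∑ l ∈ Finset.Icc (σ a) k, wgt n σ (l + 1) := by
  have h1 : ∑ l ∈ Finset.Icc (σ a) k, wgt n σ (l + 1)
      = ∑ v ∈ Finset.Icc (σ a + 1) (k + 1), wgt n σ v := by
    rw [← Finset.map_add_right_Icc (σ a) k 1, Finset.sum_map]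
    rfl
  rw [h1]
  unfold cMid
  have : ((Finset.Icc 1 n).filter fun j => σ a < σ j ∧ σ j ≤ k + 1)
      = (Finset.Icc 1 n).filter fun j => σ j ∈ Finset.Icc (σ a + 1) (k + 1) := by
    apply Finset.filter_congr
    intro x _
    simp [Finset.mem_Icc, Nat.succ_le_iff]
  rw [this, Finset.card_eq_sum_card_fiberwise (f := σ) (s := (Finset.Icc 1 n).filter fun j => σ j ∈ Finset.Icc (σ a + 1) (k + 1))
    (t := Finset.Icc (σ a + 1) (k + 1)) (fun x hx => (Finset.mem_filter.mp hx).2)]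
  apply Finset.sum_congr rfl
  intro v hv
  unfold wgt
  congr 1
  rw [Finset.filter_filter]
  apply Finset.filter_congr
  intro x _
  constructor
  · exact fun hx => hx.2
  · exact fun hx => ⟨hx ▸ hv, hx⟩

lemma Icc_one_val (w : ℕ) :
    (Finset.Icc 1 w).val = (Finset.range w).val.map (· + 1) := by
  rw [← Finset.Ico_add_one_right_eq_Icc]
  have : Finset.Ico 1 (w + 1) = (Finset.Ico 0 w).map (addRightEmbedding 1) := by
    rw [Finset.map_add_right_Ico]
  rw [this, Finset.map_val, Finset.range_eq_Ico]
  rfl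

/-- The combinatorial multiset identity underlying the fixed-point independence of the limit
of the vertex function of the cotangent bundle of a type A partial flag variety, together
with its product consequence. -/
theorem vertex_limit_multiset_identity (m n : ℕ) (hm : 0 < m) (hn : 0 < n)
    (σ : ℕ → ℕ) (hσ : ∀ i ∈ Finset.Icc 1 n, σ i ∈ Finset.Icc 1 m)
    {M : Type*} [CommMonoid M] (g : ℂ → M) (y : ℕ → ℕ → ℂ) (q h : ℂ) :
    ((Finset.Icc 1 n).val.bind fun i =>
        (Finset.Icc (σ i) (m - 1)).val.map fun k =>
          ((σ i, k, cLeft σ i + cMid n σ i k + 1) : ℕ × ℕ × ℕ)) =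
      ((Finset.Icc 1 (m - 1)).val.bind fun i =>
        (Finset.Icc 1 (wgt n σ i)).val.bind fun j =>
          (Finset.Icc i (m - 1)).val.map fun k =>
            ((i, k, j + ∑ l ∈ Finset.Icc i k, wgt n σ (l + 1)) : ℕ × ℕ × ℕ)) ∧
    (∏ i ∈ Finset.Icc 1 n, ∏ k ∈ Finset.Icc (σ i) (m - 1),
        g ((q * h) ^ (cLeft σ i + cMid n σ i k + 1) * y (σ i) k)) =
      ∏ i ∈ Finset.Icc 1 (m - 1), ∏ j ∈ Finset.Icc 1 (wgt n σ i), ∏ k ∈ Finset.Icc i (m - 1),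
        g ((q * h) ^ (j + ∑ l ∈ Finset.Icc i k, wgt n σ (l + 1)) * y i k) := by
  classical
  have key : ((Finset.Icc 1 n).val.bind fun i =>
        (Finset.Icc (σ i) (m - 1)).val.map fun k =>
          ((σ i, k, cLeft σ i + cMid n σ i k + 1) : ℕ × ℕ × ℕ)) =
      ((Finset.Icc 1 (m - 1)).val.bind fun i =>
        (Finset.Icc 1 (wgt n σ i)).val.bind fun j =>
          (Finset.Icc i (m - 1)).val.map fun k =>
            ((i, k, j + ∑ l ∈ Finset.Icc i k, wgt n σ (l + 1)) : ℕ × ℕ × ℕ)) := by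
    have step1 : ((Finset.Icc 1 n).val.bind fun i =>
          (Finset.Icc (σ i) (m - 1)).val.map fun k =>
            ((σ i, k, cLeft σ i + cMid n σ i k + 1) : ℕ × ℕ × ℕ))
        = (Finset.Icc 1 n).val.bind fun a =>
            (Finset.Icc (σ a) (m - 1)).val.map fun k =>
              ((σ a, k, (cLeft σ a + 1) + ∑ l ∈ Finset.Icc (σ a) k, wgt n σ (l + 1))
                : ℕ × ℕ × ℕ) := by
      apply Multiset.bind_congr
      intro a _
      apply Multiset.map_congr rfl
      intro k _
      rw [cMid_eq n σ a k, Nat.add_right_comm]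
    rw [step1, ← fiber_partition m n σ hσ, Multiset.bind_assoc]
    have step2 : ∀ i, (((Finset.Icc 1 n).filter fun a => σ a = i).val.bind fun a =>
          (Finset.Icc (σ a) (m - 1)).val.map fun k =>
            ((σ a, k, (cLeft σ a + 1) + ∑ l ∈ Finset.Icc (σ a) k, wgt n σ (l + 1))
              : ℕ × ℕ × ℕ))
        = (Finset.Icc 1 (wgt n σ i)).val.bind fun j =>
            (Finset.Icc i (m - 1)).val.map fun k =>
              ((i, k, j + ∑ l ∈ Finset.Icc i k, wgt n σ (l + 1)) : ℕ × ℕ × ℕ) := by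
      intro i
      have e1 : (((Finset.Icc 1 n).filter fun a => σ a = i).val.bind fun a =>
            (Finset.Icc (σ a) (m - 1)).val.map fun k =>
              ((σ a, k, (cLeft σ a + 1) + ∑ l ∈ Finset.Icc (σ a) k, wgt n σ (l + 1))
                : ℕ × ℕ × ℕ))
          = (((Finset.Icc 1 n).filter fun a => σ a = i).val.map (cLeft σ)).bind fun c =>
              (Finset.Icc i (m - 1)).val.map fun k =>
                ((i, k, (c + 1) + ∑ l ∈ Finset.Icc i k, wgt n σ (l + 1)) : ℕ × ℕ × ℕ) := by
        rw [Multiset.bind_map]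
        apply Multiset.bind_congr
        intro a ha
        have hai : σ a = i := by
          rw [Finset.mem_val, Finset.mem_filter] at ha
          exact ha.2
        rw [hai]
      rw [e1, cLeft_map n σ i, Icc_one_val, Multiset.bind_map]
    rw [Multiset.bind_congr fun i _ => step2 i]
    have hsplit : Finset.Icc 1 m = insert m (Finset.Icc 1 (m - 1)) := by
      ext x
      simp only [Finset.mem_Icc, Finset.mem_insert]
      omega
    have hmnot : m ∉ Finset.Icc 1 (m - 1) := by
      simp only [Finset.mem_Icc]
      omega
    rw [hsplit, Finset.insert_val_of_notMem hmnot, Multiset.cons_bind]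
    have hz : ((Finset.Icc 1 (wgt n σ m)).val.bind fun j =>
        (Finset.Icc m (m - 1)).val.map fun k =>
          ((m, k, j + ∑ l ∈ Finset.Icc m k, wgt n σ (l + 1)) : ℕ × ℕ × ℕ)) = 0 := by
      have : Finset.Icc m (m - 1) = ∅ := by
        apply Finset.Icc_eq_empty
        omega
      simp [this]
    rw [hz, zero_add]
  refine ⟨key, ?_⟩
  have prodeq : ∀ ms₁ ms₂ : Multiset (ℕ × ℕ × ℕ), ms₁ = ms₂ →
      (ms₁.map fun t => g ((q * h) ^ t.2.2 * y t.1 t.2.1)).prod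
        = (ms₂.map fun t => g ((q * h) ^ t.2.2 * y t.1 t.2.1)).prod := by
    intro ms₁ ms₂ hms
    rw [hms]
  have := prodeq _ _ key
  simp only [Multiset.map_bind, Multiset.map_map, Multiset.prod_bind, Function.comp] at this
  simpa only [Finset.prod_eq_multiset_prod, Multiset.map_map, Function.comp] using this
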